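/- Let ζ : ℕ → ℝ be a nondecreasing knot sequence, p ≥ 0, and let j ≥ p be an index with ζ_j ≤ x < ζ_{j+1}. Then the B-spline basis functions of degree p form a partition of unity at x: the sum of B_{i,p}(x) over i = j − p, j − p + 1, …, j equals 1. -/

import Mathlib

/-- The Cox–de Boor B-spline basis function `B_{i,p}` for the knot sequence `ζ`,
with the convention that any term whose denominator vanishes is taken to be zero. -/
noncomputable def coxDeBoor (ζ : ℕ → ℝ) : ℕ → ℕ → ℝ → ℝ
  | 0, i, x => if ζ i ≤ x ∧ x < ζ (i + 1) then 1 else 0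
  | p + 1, i, x =>
      (if ζ (i + p + 1) = ζ i then 0
       else (x - ζ i) / (ζ (i + p + 1) - ζ i) * coxDeBoor ζ p i x) +
      (if ζ (i + p + 2) = ζ (i + 1) then 0
       else (ζ (i + p + 2) - x) / (ζ (i + p + 2) - ζ (i + 1)) * coxDeBoor ζ p (i + 1) x)

lemma coxDeBoor_vanish_left (ζ : ℕ → ℝ) (hζ : Monotone ζ) :
    ∀ p i (x : ℝ), x < ζ i → coxDeBoor ζ p i x = 0 := by
  intro p
  induction p with
  | zero =>
    intro i x h
    rw [coxDeBoor, if_neg]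
    rintro ⟨h1, _⟩; linarith
  | succ p ih =>
    intro i x h
    have h2 : x < ζ (i + 1) := lt_of_lt_of_le h (hζ (Nat.le_succ i))
    rw [coxDeBoor, ih i x h, ih (i+1) x h2]
    split_ifs <;> ring

lemma coxDeBoor_vanish_right (ζ : ℕ → ℝ) (hζ : Monotone ζ) :
    ∀ p i (x : ℝ), ζ (i + p + 1) ≤ x → coxDeBoor ζ p i x = 0 := by
  intro p
  induction p with
  | zero =>
    intro i x h
    rw [coxDeBoor, if_neg]
    rintro ⟨_, h2⟩; linarith
  | succ p ih =>
    intro i x h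
    have h1 : ζ (i + p + 1) ≤ x := le_trans (hζ (by omega)) h
    have h2 : ζ ((i + 1) + p + 1) ≤ x := le_trans (hζ (by omega : (i+1)+p+1 ≤ i+(p+1)+1)) h
    rw [coxDeBoor, ih i x h1, ih (i+1) x h2]
    split_ifs <;> ring

lemma coxDeBoor_aux (ζ : ℕ → ℝ) (hζ : Monotone ζ) :
    ∀ p m (x : ℝ), ζ (m + p) ≤ x → x < ζ (m + p + 1) →
      ∑ t ∈ Finset.range (p + 1), coxDeBoor ζ p (m + t) x = 1 := by
  intro p
  induction p with
  | zero =>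
    intro m x hx1 hx2
    rw [Finset.sum_range_one]
    show (if ζ (m + 0) ≤ x ∧ x < ζ (m + 0 + 1) then (1:ℝ) else 0) = 1
    rw [if_pos ⟨hx1, hx2⟩]
  | succ p ih =>
    intro m x hx1 hx2
    have key : ∀ t, coxDeBoor ζ (p+1) (m+t) x =
        (if ζ (m+t + p + 1) = ζ (m+t) then 0
         else (x - ζ (m+t)) / (ζ (m+t + p + 1) - ζ (m+t)) * coxDeBoor ζ p (m+t) x) +
        (if ζ (m+t + p + 2) = ζ (m+t + 1) then 0
         else (ζ (m+t + p + 2) - x) / (ζ (m+t + p + 2) - ζ (m+t + 1)) * coxDeBoor ζ p (m+t+1) x) := by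
      intro t; rfl
    -- abbreviate
    set A : ℕ → ℝ := fun i => if ζ (i + p + 1) = ζ i then 0
         else (x - ζ i) / (ζ (i + p + 1) - ζ i) * coxDeBoor ζ p i x with hA
    set C : ℕ → ℝ := fun i => if ζ (i + p + 2) = ζ (i + 1) then 0
         else (ζ (i + p + 2) - x) / (ζ (i + p + 2) - ζ (i + 1)) * coxDeBoor ζ p (i+1) x with hC
    have hsum : ∑ t ∈ Finset.range (p + 2), coxDeBoor ζ (p+1) (m+t) x
        = (∑ t ∈ Finset.range (p + 2), A (m+t)) + (∑ t ∈ Finset.range (p + 2), C (m+t)) := by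
      rw [← Finset.sum_add_distrib]
      exact Finset.sum_congr rfl (fun t _ => key t)
    rw [hsum]
    -- A m = 0
    have hAm : A m = 0 := by
      have : coxDeBoor ζ p m x = 0 :=
        coxDeBoor_vanish_right ζ hζ p m x (le_trans (hζ (by omega)) hx1)
      simp [hA, this]
    have hClast : C (m + (p+1)) = 0 := by
      have : coxDeBoor ζ p (m + (p+1) + 1) x = 0 :=
        coxDeBoor_vanish_left ζ hζ p _ x (lt_of_lt_of_le hx2 (hζ (by omega)))
      simp [hC, this]
    rw [Finset.sum_range_succ' (fun t => A (m+t)) (p+1), Finset.sum_range_succ (fun t => C (m+t)) (p+1)]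
    simp only [Nat.add_zero, hAm, hClast, add_zero, zero_add]
    have hcomb : ∀ t, A (m + (t+1)) + C (m + t) = coxDeBoor ζ p (m + 1 + t) x := by
      intro t
      have heq : m + (t+1) = m + 1 + t := by omega
      have heq2 : m + t + 1 = m + 1 + t := by omega
      have heq3 : m + t + p + 2 = (m+1+t) + p + 1 := by omega
      rw [heq]
      simp only [hA, hC, heq2, heq3]
      by_cases hd : ζ ((m+1+t) + p + 1) = ζ (m+1+t)
      · rw [if_pos hd, if_pos hd]
        have hz : coxDeBoor ζ p (m+1+t) x = 0 := by
          rcases le_or_gt (ζ (m+1+t)) x with h | h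
          · exact coxDeBoor_vanish_right ζ hζ p _ x (hd ▸ h)
          · exact coxDeBoor_vanish_left ζ hζ p _ x h
        rw [hz]; ring
      · rw [if_neg hd, if_neg hd]
        have : ζ ((m+1+t)+p+1) - ζ (m+1+t) ≠ 0 := sub_ne_zero.mpr hd
        field_simp
        ring
    rw [← Finset.sum_add_distrib]
    calc ∑ t ∈ Finset.range (p+1), (A (m + (t+1)) + C (m+t))
        = ∑ t ∈ Finset.range (p+1), coxDeBoor ζ p (m+1+t) x :=
          Finset.sum_congr rfl (fun t _ => hcomb t)
      _ = 1 := ih (m+1) x (by rw [show m+1+p = m+(p+1) by omega]; exact hx1)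
            (by rw [show m+1+p+1 = m+(p+1)+1 by omega]; exact hx2)

/-- partition of unity. If `j ≥ p` and `ζ_j ≤ x < ζ_{j+1}`, then the B-spline
basis functions of degree `p` sum to `1` at `x` over `i = j - p, …, j`. -/
theorem coxDeBoor_partition_of_unity (ζ : ℕ → ℝ) (hζ : Monotone ζ) (p j : ℕ) (hj : p ≤ j)
    (x : ℝ) (hx1 : ζ j ≤ x) (hx2 : x < ζ (j + 1)) :
    ∑ i ∈ Finset.Icc (j - p) j, coxDeBoor ζ p i x = 1 := by
  have hm : j - p + p = j := by omega
  have := coxDeBoor_aux ζ hζ p (j - p) x (by rw [hm]; exact hx1) (by rw [hm]; exact hx2)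
  rw [← this]
  rw [show Finset.Icc (j - p) j
      = Finset.map ⟨fun t => j - p + t, fun a b h => by dsimp at h; omega⟩ (Finset.range (p+1)) by
    ext i
    simp only [Finset.mem_Icc, Finset.mem_map, Finset.mem_range, Function.Embedding.coeFn_mk]
    constructor
    · intro ⟨h1, h2⟩; exact ⟨i - (j - p), by omega, by show j - p + (i - (j - p)) = i; omega⟩
    · rintro ⟨t, ht, rfl⟩; change j - p ≤ j - p + t ∧ j - p + t ≤ j; omega]
  rw [Finset.sum_map]
  rfl
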